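/- Suppose κ is a cardinal satisfying κ^ω = κ. For every κ-Borel set X ⊆ κ^κ there is a κ-Borel*-code (T,L) with T a subtree of κ^{<ω} such that for all ξ ∈ κ^κ, ξ ∈ X if and only if II has a winning strategy in GB(ξ,(T,L)); conversely, every set coded by a κ-Borel*-code with tree a subtree of κ^{<ω} is κ-Borel. -/

import Mathlib

open Cardinal Set

universe u v w

namespace GDST

variable {K : Type u} {A : Type v}

/-- The set `N_η` determined by the partial function with domain `Y` and values given by `η`. -/
def nbhd (Y : Set K) (η : K → A) : Set (K → A) := {ζ | ∀ i ∈ Y, ζ i = η i}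

/-- Basic κ-open subsets of `K → K`: sets `N_η` where `η` is a partial function with
domain of size `< #K`, together with the empty set. -/
def IsBasicOpen (S : Set (K → A)) : Prop :=
  (∃ (Y : Set K) (η : K → A), #Y < #K ∧ S = nbhd Y η) ∨ S = ∅

/-- Open in the topology generated by the basic κ-open sets. -/
def IsOpenStd (U : Set (K → A)) : Prop :=
  ∀ ζ ∈ U, ∃ S : Set (K → A), IsBasicOpen S ∧ ζ ∈ S ∧ S ⊆ U

/-- A union of at most `μ` basic κ-open sets; `(κ,μ)`-open. -/
def IsMuOpen (μ : Cardinal.{u}) (U : Set (K → A)) : Prop :=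
  ∃ (ι : Type u) (f : ι → Set (K → A)), #ι ≤ μ ∧ (∀ i, IsBasicOpen (f i)) ∧ U = ⋃ i, f i

/-- `(κ,μ)`-closed: the complement is `(κ,μ)`-open. -/
def IsMuClosed (μ : Cardinal.{u}) (C : Set (K → A)) : Prop := IsMuOpen μ Cᶜ

/-- The `(κ,μ)`-Borel sets: the smallest class containing the basic κ-open sets and closed
under complements and unions and intersections of length at most `μ`. -/
inductive MuBorel (μ : Cardinal.{u}) : Set (K → A) → Prop
  | basic (S : Set (K → A)) : IsBasicOpen S → MuBorel μ S
  | compl (S : Set (K → A)) : MuBorel μ S → MuBorel μ Sᶜ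
  | iUnion (ι : Type u) (f : ι → Set (K → A)) : #ι ≤ μ → (∀ i, MuBorel μ (f i)) →
      MuBorel μ (⋃ i, f i)
  | iInter (ι : Type u) (f : ι → Set (K → A)) : #ι ≤ μ → (∀ i, MuBorel μ (f i)) →
      MuBorel μ (⋂ i, f i)

/-- κ-open: a union of at most `κ = #K` basic κ-open sets. -/
def IsKOpen (U : Set (K → A)) : Prop := IsMuOpen #K U

/-- κ-closed. -/
def IsKClosed (C : Set (K → A)) : Prop := IsMuClosed #K C

/-- κ-Borel. -/
def KBorel (S : Set (K → A)) : Prop := MuBorel #K S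

/- Product space versions, for subsets of `(K → A) × (K → B)`. -/
section Prod

variable {B : Type w}

/-- Basic κ-open subsets of the product: products of basic κ-open sets. -/
def IsBasicOpen2 (S : Set ((K → A) × (K → B))) : Prop :=
  ∃ (S₁ : Set (K → A)) (S₂ : Set (K → B)), IsBasicOpen S₁ ∧ IsBasicOpen S₂ ∧ S = S₁ ×ˢ S₂

def IsOpenStd2 (U : Set ((K → A) × (K → B))) : Prop :=
  ∀ p ∈ U, ∃ S, IsBasicOpen2 S ∧ p ∈ S ∧ S ⊆ U

def IsMuOpen2 (μ : Cardinal.{u}) (U : Set ((K → A) × (K → B))) : Prop :=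
  ∃ (ι : Type u) (f : ι → Set ((K → A) × (K → B))),
    #ι ≤ μ ∧ (∀ i, IsBasicOpen2 (f i)) ∧ U = ⋃ i, f i

def IsMuClosed2 (μ : Cardinal.{u}) (C : Set ((K → A) × (K → B))) : Prop := IsMuOpen2 μ Cᶜ

inductive MuBorel2 (μ : Cardinal.{u}) : Set ((K → A) × (K → B)) → Prop
  | basic (S : Set ((K → A) × (K → B))) : IsBasicOpen2 S → MuBorel2 μ S
  | compl (S : Set ((K → A) × (K → B))) : MuBorel2 μ S → MuBorel2 μ Sᶜ
  | iUnion (ι : Type u) (f : ι → Set ((K → A) × (K → B))) : #ι ≤ μ → (∀ i, MuBorel2 μ (f i)) →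
      MuBorel2 μ (⋃ i, f i)
  | iInter (ι : Type u) (f : ι → Set ((K → A) × (K → B))) : #ι ≤ μ → (∀ i, MuBorel2 μ (f i)) →
      MuBorel2 μ (⋂ i, f i)

def IsKOpen2 (U : Set ((K → A) × (K → B))) : Prop := IsMuOpen2 #K U

def IsKClosed2 (C : Set ((K → A) × (K → B))) : Prop := IsMuClosed2 #K C

def KBorel2 (S : Set ((K → A) × (K → B))) : Prop := MuBorel2 #K S

/-- κ-Σ¹₁ : projections of κ-Borel subsets of the product. -/
def KSigma11 (S : Set (K → A)) : Prop :=
  ∃ C : Set ((K → A) × (K → A)), KBorel2 C ∧ S = Prod.fst '' C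

end Prod

end GDST

namespace GDST

/-- A labelled tree: a carrier with a partial-order relation, a boolean label on nodes
(true = union-node, false = intersection-node) and a set label on (leaf) nodes. -/
structure LTree (K : Type u) : Type (u + 1) where
  T : Type u
  le : T → T → Prop
  le_refl : ∀ t, le t t
  le_antisymm : ∀ a b, le a b → le b a → a = b
  le_trans : ∀ a b c, le a b → le b c → le a c
  isUnion : T → Bool
  leafLab : T → Set (K → K)

namespace LTree

variable {K : Type u} (G : LTree K)

def lt (a b : G.T) : Prop := G.le a b ∧ a ≠ b

def IsLeaf (t : G.T) : Prop := ∀ s, G.le t s → s = t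

def ImmSucc (a b : G.T) : Prop := G.lt a b ∧ ∀ c, G.le a c → G.le c b → c = a ∨ c = b

/-- No chain of order type κ. -/
def NoKBranch [LinearOrder K] : Prop :=
  ¬ ∃ f : K → G.T, ∀ a b : K, a < b → G.lt (f a) (f b)

/-- A good labelled (κ,λ)-tree: a tree of size at most λ without κ-branches, each node
having at most κ immediate successors, increasing chains having suprema, and leaves
labelled by basic κ-open sets. -/
def Good [LinearOrder K] (lam : Cardinal.{u}) : Prop :=
  G.NoKBranch ∧
  (∀ t : G.T, #{s : G.T // G.ImmSucc t s} ≤ #K) ∧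
  #G.T ≤ lam ∧
  (∀ C : Set G.T, (∀ a ∈ C, ∀ b ∈ C, G.le a b ∨ G.le b a) → C.Nonempty →
    ∃ s : G.T, (∀ c ∈ C, G.le c s) ∧ ∀ u : G.T, (∀ c ∈ C, G.le c u) → G.le s u) ∧
  (∀ t : G.T, G.IsLeaf t → IsBasicOpen (G.leafLab t))

/-- A weak good labelled κ-tree: as Good but with no restriction on the size of the tree. -/
def GoodWeak [LinearOrder K] : Prop :=
  G.NoKBranch ∧
  (∀ t : G.T, #{s : G.T // G.ImmSucc t s} ≤ #K) ∧
  (∀ C : Set G.T, (∀ a ∈ C, ∀ b ∈ C, G.le a b ∨ G.le b a) → C.Nonempty →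
    ∃ s : G.T, (∀ c ∈ C, G.le c s) ∧ ∀ u : G.T, (∀ c ∈ C, G.le c u) → G.le s u) ∧
  (∀ t : G.T, G.IsLeaf t → IsBasicOpen (G.leafLab t))

/-- A (positional) strategy of player II: at each union-node it picks an immediate successor. -/
def Legal (σ : G.T → G.T) : Prop :=
  ∀ t : G.T, ¬ G.IsLeaf t → G.isUnion t = true → G.ImmSucc t (σ t)

/-- A play of the game GB(ξ,(T,L)) in which II follows σ: a downward closed maximal chain
which at union-nodes follows σ. -/
def IsPlay (σ : G.T → G.T) (c : Set G.T) : Prop :=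
  c.Nonempty ∧
  (∀ a ∈ c, ∀ b ∈ c, G.le a b ∨ G.le b a) ∧
  (∀ a ∈ c, ∀ b : G.T, G.le b a → b ∈ c) ∧
  (∀ t ∈ c, ¬ G.IsLeaf t → ∃ s ∈ c, G.lt t s) ∧
  (∀ t ∈ c, ¬ G.IsLeaf t → G.isUnion t = true → σ t ∈ c)

/-- σ is a winning strategy of II in GB(ξ,(T,L)): every play following σ reaches a leaf
whose label contains ξ. -/
def Wins (σ : G.T → G.T) (ξ : K → K) : Prop :=
  ∀ c : Set G.T, G.IsPlay σ c → ∃ t ∈ c, G.IsLeaf t ∧ ξ ∈ G.leafLab t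

/-- II has a winning strategy in GB(ξ,(T,L)). -/
def IIWins (ξ : K → K) : Prop := ∃ σ : G.T → G.T, G.Legal σ ∧ G.Wins σ ξ

/-- (T,L) is a Borel*-code: there is a coding of strategies of II by elements of a κ-closed
set D ⊆ κ^κ such that every winnable game is won by a coded strategy and the set of pairs
(ξ,η) for which the coded strategy wins is κ-Borel. -/
def IsCode : Prop :=
  ∃ (D : Set (K → K)) (π : (K → K) → G.T → G.T),
    IsKClosed D ∧
    (∀ η ∈ D, G.Legal (π η)) ∧
    (∀ ξ : K → K, G.IIWins ξ → ∃ η ∈ D, G.Wins (π η) ξ) ∧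
    KBorel2 {p : (K → K) × (K → K) | p.2 ∈ D ∧ G.Wins (π p.2) p.1}

end LTree

/-- X is a (κ,λ)-Borel* set: coded by some good labelled (κ,λ)-tree which is a Borel*-code. -/
def IsBorelStar {K : Type u} [LinearOrder K] (lam : Cardinal.{u}) (X : Set (K → K)) : Prop :=
  ∃ G : LTree K, G.Good lam ∧ G.IsCode ∧ ∀ ξ : K → K, ξ ∈ X ↔ G.IIWins ξ

end GDST

namespace GDST

/-- G is (isomorphic to) a subtree of κ^{<ω}: it order-embeds onto a prefix-closed set of
finite sequences from K, ordered by the initial segment relation. -/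
def LTree.SubtreeOfFinSeqs {K : Type u} (G : LTree K) : Prop :=
  ∃ e : G.T → List K,
    Function.Injective e ∧
    (∀ a b : G.T, G.le a b ↔ e a <+: e b) ∧
    (∀ (a : G.T) (l : List K), l <+: e a → ∃ b : G.T, e b = l)
end GDST
namespace GDST
set_option linter.dupNamespace false
set_option linter.unusedSectionVars false

section Abstract

variable {K : Type u} [LinearOrder K] {G : LTree K} {e : G.T → List K}

section PrefixFacts


variable (he1 : Function.Injective e)
  (he2 : ∀ a b, G.le a b ↔ e a <+: e b)
  (he3 : ∀ (a : G.T) (l : List K), l <+: e a → ∃ b, e b = l)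

include he1 he2

theorem lt_iff' (a b : G.T) : G.lt a b ↔ e a <+: e b ∧ e a ≠ e b := by
  unfold LTree.lt
  rw [he2]
  constructor
  · rintro ⟨h1, h2⟩; exact ⟨h1, fun hh => h2 (he1 hh)⟩
  · rintro ⟨h1, h2⟩; exact ⟨h1, fun hh => h2 (by rw [hh])⟩

theorem length_lt_of_lt' (a b : G.T) (h : G.lt a b) : (e a).length < (e b).length := by
  rw [lt_iff' he1 he2] at h
  rcases h with ⟨h1, h2⟩
  rcases lt_or_eq_of_le h1.length_le with h | h
  · exact h
  · exact absurd (h1.eq_of_length h) h2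

theorem eq_of_le_of_length_le' (a b : G.T) (h : G.le a b)
    (hl : (e b).length ≤ (e a).length) : a = b := by
  rw [he2] at h
  exact he1 (h.eq_of_length (le_antisymm h.length_le hl))

/-- If `e s = e a ++ [x]` then `s` is an immediate successor of `a`. -/
theorem immSucc_of_append' (a s : G.T) (x : K) (hs : e s = e a ++ [x]) :
    G.ImmSucc a s := by
  have hpre : e a <+: e s := by rw [hs]; exact ⟨[x], rfl⟩
  have hlen : (e s).length = (e a).length + 1 := by rw [hs]; simp
  constructor
  · rw [lt_iff' he1 he2]
    refine ⟨hpre, fun hh => ?_⟩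
    rw [hh] at hlen; omega
  · intro u hau hus
    rw [he2] at hau hus
    rcases Nat.lt_or_ge (e u).length ((e a).length + 1) with h | h
    · left
      exact (eq_of_le_of_length_le' he1 he2 a u (by rw [he2]; exact hau)
        (by omega)).symm
    · right
      exact eq_of_le_of_length_le' he1 he2 u s (by rw [he2]; exact hus) (by omega)

include he3 in
/-- Given `a < s`, there is an immediate successor of `a` below `s`. -/
theorem exists_immSucc_le' (a s : G.T) (h : G.lt a s) :
    ∃ b, G.ImmSucc a b ∧ G.le b s ∧ (e b).length = (e a).length + 1 := by
  rw [lt_iff' he1 he2] at h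
  obtain ⟨h1, h2⟩ := h
  have hlen : (e a).length < (e s).length := by
    rcases lt_or_eq_of_le h1.length_le with h | h
    · exact h
    · exact absurd (h1.eq_of_length h) h2
  have htake : (e s).take ((e a).length + 1) <+: e s := List.take_prefix _ _
  obtain ⟨b, hb⟩ := he3 s _ htake
  have hba : e b = e a ++ [(e s).get ⟨(e a).length, hlen⟩] := by
    rw [hb]
    have h1' : e a = (e s).take (e a).length := List.prefix_iff_eq_take.mp h1
    rw [List.take_succ]
    congr 1
    · exact h1'.symm
    · simp [List.getElem?_eq_getElem hlen]
  refine ⟨b, immSucc_of_append' he1 he2 a b _ hba, ?_, by rw [hba]; simp⟩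
  rw [he2, hb]
  exact List.take_prefix _ _

include he3 in
/-- Immediate successors are one-point extensions. -/
theorem immSucc_append_form' (a s : G.T) (h : G.ImmSucc a s) :
    ∃ x, e s = e a ++ [x] := by
  obtain ⟨b, hb, hbs, hblen⟩ := exists_immSucc_le' he1 he2 he3 a s h.1
  have hcase : b = a ∨ b = s := h.2 b hb.1.1 hbs
  have hbs' : b = s := by
    rcases hcase with h' | h'
    · exact absurd h' (fun hh => hb.1.2 hh.symm)
    · exact h'
  have hpre : e a <+: e s := by rw [← he2]; exact h.1.1
  have hlen : (e s).length = (e a).length + 1 := by rw [← hbs']; exact hblen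
  obtain ⟨t, ht⟩ := hpre
  have : t.length = 1 := by
    have := congrArg List.length ht; simp at this; omega
  obtain ⟨x, hx⟩ := List.length_eq_one_iff.mp this
  exact ⟨x, by rw [← ht, hx]⟩

include he3 in
theorem exists_immSucc' (a : G.T) (h : ¬ G.IsLeaf a) : ∃ b, G.ImmSucc a b := by
  rcases not_forall.mp h with ⟨s, hs⟩
  rcases _root_.not_imp.mp hs with ⟨has, hne⟩
  obtain ⟨b, hb, -⟩ := exists_immSucc_le' he1 he2 he3 a s ⟨has, fun hh => hne (hh ▸ rfl)⟩
  exact ⟨b, hb⟩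

omit he1

/-- In a tree with suprema of chains, the lengths of elements of a chain are bounded. -/
theorem chain_bdd' (hsup : ∀ C : Set G.T, (∀ a ∈ C, ∀ b ∈ C, G.le a b ∨ G.le b a) →
      C.Nonempty → ∃ s : G.T, (∀ c ∈ C, G.le c s) ∧ ∀ u : G.T, (∀ c ∈ C, G.le c u) → G.le s u)
    (C : Set G.T) (hC : ∀ a ∈ C, ∀ b ∈ C, G.le a b ∨ G.le b a) (hne : C.Nonempty) :
    ∃ N, ∀ t ∈ C, (e t).length ≤ N := by
  obtain ⟨s, hs, -⟩ := hsup C hC hne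
  exact ⟨(e s).length, fun t ht => ((he2 t s).mp (hs t ht)).length_le⟩

include he1 in
/-- A nonempty chain with bounded lengths has a maximum. -/
theorem chain_max' (C : Set G.T) (hC : ∀ a ∈ C, ∀ b ∈ C, G.le a b ∨ G.le b a)
    (hne : C.Nonempty) (N : ℕ) (hN : ∀ t ∈ C, (e t).length ≤ N) :
    ∃ m ∈ C, ∀ t ∈ C, G.le t m := by
  set L : Set ℕ := {n | ∃ t ∈ C, (e t).length = n} with hL
  have hLne : L.Nonempty := ⟨(e hne.choose).length, hne.choose, hne.choose_spec, rfl⟩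
  have hLbdd : BddAbove L := ⟨N, by rintro n ⟨t, ht, rfl⟩; exact hN t ht⟩
  obtain ⟨m, hm, hml⟩ : ∃ t ∈ C, (e t).length = sSup L := Nat.sSup_mem hLne hLbdd
  refine ⟨m, hm, fun t ht => ?_⟩
  rcases hC t ht m hm with h | h
  · exact h
  · have : m = t := eq_of_le_of_length_le' he1 he2 m t h
      (by rw [hml]; exact le_csSup hLbdd ⟨t, ht, rfl⟩)
    rw [← this]; exact G.le_refl m

include he1 in
theorem wf_succ' (hsup : ∀ C : Set G.T, (∀ a ∈ C, ∀ b ∈ C, G.le a b ∨ G.le b a) →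
      C.Nonempty → ∃ s : G.T, (∀ c ∈ C, G.le c s) ∧ ∀ u : G.T, (∀ c ∈ C, G.le c u) → G.le s u) :
    WellFounded (fun s t : G.T => G.ImmSucc t s) := by
  have htrans : ∀ a b c : G.T, G.lt a b → G.lt b c → G.lt a c := by
    rintro a b c ⟨h1, h2⟩ ⟨h3, h4⟩
    refine ⟨G.le_trans _ _ _ h1 h3, fun hh => ?_⟩
    subst hh
    exact h2 (G.le_antisymm _ _ h1 h3)
  have hwflt : WellFounded (fun s t : G.T => G.lt t s) := by
    haveI : IsTrans G.T (fun s t : G.T => G.lt t s) := ⟨fun a b c h1 h2 => htrans c b a h2 h1⟩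
    haveI : IsIrrefl G.T (fun s t : G.T => G.lt t s) := ⟨fun a h => h.2 rfl⟩
    haveI : IsStrictOrder G.T (fun s t : G.T => G.lt t s) := {}
    rw [RelEmbedding.wellFounded_iff_isEmpty]
    constructor
    intro f
    have hmono : ∀ m n : ℕ, m < n → G.lt (f m) (f n) := fun m n h => f.map_rel_iff.mpr h
    obtain ⟨N, hN⟩ := chain_bdd' he2 hsup (Set.range f)
      (by rintro a ⟨m, rfl⟩ b ⟨n, rfl⟩
          rcases Nat.lt_trichotomy m n with h | h | h
          · exact Or.inl (hmono m n h).1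
          · subst h; exact Or.inl (G.le_refl _)
          · exact Or.inr (hmono n m h).1)
      ⟨f 0, 0, rfl⟩
    have hlen : ∀ n : ℕ, n ≤ (e (f n)).length := by
      intro n
      induction n with
      | zero => omega
      | succ n ih =>
        have h1 := length_lt_of_lt' he1 he2 _ _ (hmono n (n+1) (Nat.lt_succ_self n))
        omega
    have h1 := hlen (N + 1)
    have h2 := hN (f (N+1)) ⟨N+1, rfl⟩
    omega
  exact Subrelation.wf (fun {s t} h => h.1) hwflt

end PrefixFacts

section Eval

attribute [local instance] Classical.propDecidable

variable (G)

/-- Evaluation of the labelled tree as a set, by well-founded recursion upward. -/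
noncomputable def evalT (hwf : WellFounded (fun s t : G.T => G.ImmSucc t s)) : G.T → Set (K → K) :=
  hwf.fix fun t ih =>
    if G.IsLeaf t then G.leafLab t
    else if G.isUnion t then ⋃ s : {s // G.ImmSucc t s}, ih s s.2
    else ⋂ s : {s // G.ImmSucc t s}, ih s s.2

/-- Evaluation along a fixed strategy `σ` of player II. -/
noncomputable def evalSig (σ : G.T → G.T) (hσ : G.Legal σ)
    (hwf : WellFounded (fun s t : G.T => G.ImmSucc t s)) : G.T → Set (K → K) :=
  hwf.fix fun t ih =>
    if h : G.IsLeaf t then G.leafLab t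
    else if hu : G.isUnion t then ih (σ t) (hσ t h hu)
    else ⋂ s : {s // G.ImmSucc t s}, ih s s.2

variable (hwf : WellFounded (fun s t : G.T => G.ImmSucc t s))

theorem evalT_leaf (t : G.T) (h : G.IsLeaf t) : evalT G hwf t = G.leafLab t := by
  rw [evalT, hwf.fix_eq]; simp [h]

theorem evalT_union (t : G.T) (h : ¬ G.IsLeaf t) (hu : G.isUnion t) :
    evalT G hwf t = ⋃ s : {s // G.ImmSucc t s}, evalT G hwf s := by
  conv_lhs => rw [evalT, hwf.fix_eq]
  simp only [h, hu, if_false, if_true]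
  rfl

theorem evalT_inter (t : G.T) (h : ¬ G.IsLeaf t) (hu : ¬ G.isUnion t) :
    evalT G hwf t = ⋂ s : {s // G.ImmSucc t s}, evalT G hwf s := by
  conv_lhs => rw [evalT, hwf.fix_eq]
  simp only [h, hu, if_false]
  rfl

variable (σ : G.T → G.T) (hσ : G.Legal σ)

theorem evalSig_leaf (t : G.T) (h : G.IsLeaf t) : evalSig G σ hσ hwf t = G.leafLab t := by
  rw [evalSig, hwf.fix_eq]; simp [h]

theorem evalSig_union (t : G.T) (h : ¬ G.IsLeaf t) (hu : G.isUnion t) :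
    evalSig G σ hσ hwf t = evalSig G σ hσ hwf (σ t) := by
  conv_lhs => rw [evalSig, hwf.fix_eq]
  simp only [h, hu, dif_neg, dif_pos, not_false_iff]
  rfl

theorem evalSig_inter (t : G.T) (h : ¬ G.IsLeaf t) (hu : ¬ G.isUnion t) :
    evalSig G σ hσ hwf t = ⋂ s : {s // G.ImmSucc t s}, evalSig G σ hσ hwf s := by
  conv_lhs => rw [evalSig, hwf.fix_eq]
  simp only [h, hu, dif_neg, not_false_iff]
  rfl

theorem evalSig_subset_evalT : ∀ t : G.T, evalSig G σ hσ hwf t ⊆ evalT G hwf t := by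
  intro t
  induction t using hwf.induction with
  | _ t ih =>
    by_cases h : G.IsLeaf t
    · rw [evalSig_leaf G hwf σ hσ t h, evalT_leaf G hwf t h]
    · by_cases hu : G.isUnion t
      · rw [evalSig_union G hwf σ hσ t h hu, evalT_union G hwf t h hu]
        exact (ih (σ t) (hσ t h hu)).trans
          (Set.subset_iUnion (fun s : {s // G.ImmSucc t s} => evalT G hwf s) ⟨σ t, hσ t h hu⟩)
      · rw [evalSig_inter G hwf σ hσ t h hu, evalT_inter G hwf t h hu]
        exact Set.iInter_mono fun s => ih s s.2

theorem kBorel_evalT (hleaf : ∀ t : G.T, G.IsLeaf t → IsBasicOpen (G.leafLab t))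
    (himm : ∀ t : G.T, #{s : G.T // G.ImmSucc t s} ≤ #K) :
    ∀ t : G.T, KBorel (evalT G hwf t) := by
  intro t
  induction t using hwf.induction with
  | _ t ih =>
    by_cases h : G.IsLeaf t
    · rw [evalT_leaf G hwf t h]; exact MuBorel.basic _ (hleaf t h)
    · by_cases hu : G.isUnion t
      · rw [evalT_union G hwf t h hu]
        exact MuBorel.iUnion _ _ (himm t) fun s => ih s s.2
      · rw [evalT_inter G hwf t h hu]
        exact MuBorel.iInter _ _ (himm t) fun s => ih s s.2

end Eval

section Games

variable (he1 : Function.Injective e)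
  (he2 : ∀ a b, G.le a b ↔ e a <+: e b)
  (he3 : ∀ (a : G.T) (l : List K), l <+: e a → ∃ b, e b = l)
  (hsup : ∀ C : Set G.T, (∀ a ∈ C, ∀ b ∈ C, G.le a b ∨ G.le b a) →
      C.Nonempty → ∃ s : G.T, (∀ c ∈ C, G.le c s) ∧ ∀ u : G.T, (∀ c ∈ C, G.le c u) → G.le s u)
  (hwf : WellFounded (fun s t : G.T => G.ImmSucc t s))

include he1 he2 he3 hsup

theorem wins_of_mem_evalSig (σ : G.T → G.T) (hσ : G.Legal σ) (r : G.T) (hr : e r = [])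
    (ξ : K → K) (hξ : ξ ∈ evalSig G σ hσ hwf r) : G.Wins σ ξ := by
  intro c hc
  obtain ⟨hne, hchain, hdown, hmaxc, hfollow⟩ := hc
  obtain ⟨N, hN⟩ := chain_bdd' he2 hsup c hchain hne
  obtain ⟨m, hm, hmax'⟩ := chain_max' he1 he2 c hchain hne N hN
  have key : ∀ n : ℕ, ∀ t ∈ c, (e t).length = n → ξ ∈ evalSig G σ hσ hwf t := by
    intro n
    induction n using Nat.strong_induction_on with
    | _ n ih =>
      intro t htc hlen
      rcases Nat.eq_zero_or_pos n with h0 | hpos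
      · have : t = r := he1 (by
          rw [hr]
          exact List.eq_nil_of_length_eq_zero (by omega))
        rwa [this]
      · obtain ⟨b, hb⟩ := he3 t ((e t).take (n-1)) (List.take_prefix _ _)
        have hbt : G.le b t := by rw [he2, hb]; exact List.take_prefix _ _
        have hbc : b ∈ c := hdown t htc b hbt
        have hblen : (e b).length = n - 1 := by rw [hb]; simp; omega
        have hform : e t = e b ++ [(e t).get ⟨n-1, by omega⟩] := by
          have h1 : (e t).take ((n-1)+1) = (e t).take (n-1) ++ [(e t).get ⟨n-1, by omega⟩] := by
            rw [List.take_succ]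
            congr 1
            rw [List.getElem?_eq_getElem (by omega)]
            rfl
          have h2 : (e t).take ((n-1)+1) = e t := by
            have h3 : (n-1)+1 = n := by omega
            rw [h3, ← hlen, List.take_length]
          rw [hb, ← h1, h2]
        have himm : G.ImmSucc b t := immSucc_of_append' he1 he2 b t _ hform
        have hbleaf : ¬ G.IsLeaf b := by
          intro hl
          have h4 := hl t hbt
          rw [h4] at hlen
          omega
        have hbeval : ξ ∈ evalSig G σ hσ hwf b := ih (n-1) (by omega) b hbc hblen
        by_cases hu : G.isUnion b
        · have hσb : σ b ∈ c := hfollow b hbc hbleaf hu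
          have hσimm : G.ImmSucc b (σ b) := hσ b hbleaf hu
          have hσlen : (e (σ b)).length = n := by
            obtain ⟨x, hx⟩ := immSucc_append_form' he1 he2 he3 b (σ b) hσimm
            rw [hx]; simp; omega
          have hts : t = σ b := by
            rcases hchain t htc (σ b) hσb with h | h
            · exact eq_of_le_of_length_le' he1 he2 t (σ b) h (by omega)
            · exact (eq_of_le_of_length_le' he1 he2 (σ b) t h (by omega)).symm
          rw [hts, ← evalSig_union G hwf σ hσ b hbleaf hu]
          exact hbeval
        · rw [evalSig_inter G hwf σ hσ b hbleaf hu] at hbeval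
          exact Set.mem_iInter.mp hbeval ⟨t, himm⟩
  have hmleaf : G.IsLeaf m := by
    by_contra hml
    obtain ⟨s, hs, hlt⟩ := hmaxc m hm hml
    exact hlt.2 (G.le_antisymm _ _ hlt.1 (hmax' s hs))
  refine ⟨m, hm, hmleaf, ?_⟩
  have h5 := key (e m).length m hm rfl
  rwa [evalSig_leaf G hwf σ hσ m hmleaf] at h5

theorem mem_evalSig_of_wins (σ : G.T → G.T) (hσ : G.Legal σ) (r : G.T) (hr : e r = [])
    (ξ : K → K) (hw : G.Wins σ ξ) : ξ ∈ evalSig G σ hσ hwf r := by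
  classical
  by_contra hξ
  let nxt : G.T → G.T := fun t =>
    if h : G.IsLeaf t then t
    else if hu : G.isUnion t then σ t
    else if h2 : ∃ s, G.ImmSucc t s ∧ ξ ∉ evalSig G σ hσ hwf s then h2.choose else t
  let f : ℕ → G.T := fun n => nxt^[n] r
  have hf0 : f 0 = r := rfl
  have hfs : ∀ n, f (n+1) = nxt (f n) := fun n => Function.iterate_succ_apply' nxt n r
  have hstep : ∀ t, ξ ∉ evalSig G σ hσ hwf t → ¬ G.IsLeaf t →
      G.ImmSucc t (nxt t) ∧ ξ ∉ evalSig G σ hσ hwf (nxt t) := by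
    intro t ht hl
    by_cases hu : G.isUnion t
    · have h1 : nxt t = σ t := by simp only [nxt, dif_neg hl, dif_pos hu]
      rw [h1]
      refine ⟨hσ t hl hu, ?_⟩
      rw [← evalSig_union G hwf σ hσ t hl hu]
      exact ht
    · have h2 : ∃ s, G.ImmSucc t s ∧ ξ ∉ evalSig G σ hσ hwf s := by
        by_contra hno
        push_neg at hno
        refine ht ?_
        rw [evalSig_inter G hwf σ hσ t hl hu]
        exact Set.mem_iInter.mpr fun s => hno s s.2
      have h1 : nxt t = h2.choose := by
        simp only [nxt, dif_neg hl, dif_neg hu, dif_pos h2]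
      rw [h1]
      exact ⟨h2.choose_spec.1, h2.choose_spec.2⟩
  have hinv : ∀ n, ξ ∉ evalSig G σ hσ hwf (f n) := by
    intro n
    induction n with
    | zero => rwa [hf0]
    | succ n ih =>
      by_cases hl : G.IsLeaf (f n)
      · rw [hfs n]
        have h1 : nxt (f n) = f n := by simp only [nxt, dif_pos hl]
        rwa [h1]
      · rw [hfs n]
        exact (hstep (f n) ih hl).2
  have himm : ∀ n, ¬ G.IsLeaf (f n) → G.ImmSucc (f n) (f (n+1)) := by
    intro n hl
    rw [hfs n]
    exact (hstep (f n) (hinv n) hl).1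
  have hlen : ∀ n, (∀ k, k < n → ¬ G.IsLeaf (f k)) → (e (f n)).length = n := by
    intro n
    induction n with
    | zero => intro _; rw [hf0, hr]; rfl
    | succ n ih =>
      intro h
      have h1 := himm n (h n (by omega))
      obtain ⟨x, hx⟩ := immSucc_append_form' he1 he2 he3 _ _ h1
      rw [hx]
      simp [ih (fun k hk => h k (by omega))]
  have hle : ∀ m n, m ≤ n → (∀ k, k < n → ¬ G.IsLeaf (f k)) → G.le (f m) (f n) := by
    intro m n h hkl
    induction n with
    | zero =>
      have h0 : m = 0 := by omega
      rw [h0]; exact G.le_refl _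
    | succ n ih =>
      rcases Nat.lt_or_ge m (n+1) with h' | h'
      · exact G.le_trans _ _ _ (ih (by omega) (fun k hk => hkl k (by omega)))
          (himm n (hkl n (by omega))).1.1
      · have h0 : m = n+1 := by omega
        rw [h0]; exact G.le_refl _
  have hN : ∃ N, G.IsLeaf (f N) := by
    by_contra hno
    push_neg at hno
    obtain ⟨N, hNb⟩ := chain_bdd' he2 hsup (Set.range f)
      (by rintro a ⟨p, rfl⟩ b ⟨q, rfl⟩
          rcases Nat.le_total p q with h | h
          · exact Or.inl (hle p q h (fun k _ => hno k))
          · exact Or.inr (hle q p h (fun k _ => hno k)))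
      ⟨f 0, 0, rfl⟩
    have h1 := hlen (N+1) (fun k _ => hno k)
    have h2 := hNb (f (N+1)) ⟨N+1, rfl⟩
    omega
  set N := Nat.find hN with hNdef
  have hNleaf : G.IsLeaf (f N) := Nat.find_spec hN
  have hNmin : ∀ k, k < N → ¬ G.IsLeaf (f k) := fun k hk => Nat.find_min hN hk
  have hlenN : ∀ k, k ≤ N → (e (f k)).length = k :=
    fun k hk => hlen k (fun j hj => hNmin j (by omega))
  have hleN : ∀ k, k ≤ N → G.le (f k) (f N) := fun k hk => hle k N hk hNmin
  set cset : Set G.T := {t | G.le t (f N)} with hcset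
  have hmem : ∀ t ∈ cset, t = f (e t).length ∧ (e t).length ≤ N := by
    intro t ht
    have hpre : e t <+: e (f N) := (he2 _ _).mp ht
    have hlt : (e t).length ≤ N := by
      have h6 := hpre.length_le
      rw [hlenN N le_rfl] at h6
      exact h6
    refine ⟨he1 ?_, hlt⟩
    have h1 : e (f (e t).length) <+: e (f N) := (he2 _ _).mp (hleN _ hlt)
    have h2 : (e (f (e t).length)).length = (e t).length := hlenN _ hlt
    exact (List.prefix_of_prefix_length_le hpre h1 (by omega)).eq_of_length (by omega)
  have hplay : G.IsPlay σ cset := by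
    refine ⟨⟨f N, G.le_refl _⟩, ?_, ?_, ?_, ?_⟩
    · intro a ha b hb
      rcases List.prefix_or_prefix_of_prefix ((he2 _ _).mp ha) ((he2 _ _).mp hb) with h | h
      · exact Or.inl ((he2 _ _).mpr h)
      · exact Or.inr ((he2 _ _).mpr h)
    · intro a ha b hba
      exact G.le_trans _ _ _ hba ha
    · intro t ht hl
      exact ⟨f N, G.le_refl _, ht, fun hh => hl (by rw [hh]; exact hNleaf)⟩
    · intro t ht hl hu
      obtain ⟨ht', hkN⟩ := hmem t ht
      have hklt : (e t).length < N := by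
        rcases Nat.lt_or_ge (e t).length N with h | h
        · exact h
        · exfalso
          have h7 : (e t).length = N := by omega
          rw [h7] at ht'
          exact hl (ht' ▸ hNleaf)
      have h8 : f ((e t).length + 1) = σ t := by
        rw [hfs (e t).length, ← ht']
        simp only [nxt, dif_neg hl, dif_pos hu]
      have h9 : σ t ∈ cset := by
        rw [← h8]
        exact hleN _ (by omega)
      exact h9
  obtain ⟨t, htc, htl, htlab⟩ := hw cset hplay
  obtain ⟨ht', hkN⟩ := hmem t htc
  have h10 : (e t).length = N := by
    by_contra h
    exact hNmin (e t).length (by omega) (ht' ▸ htl)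
  have h11 := hinv N
  rw [← h10, ← ht', evalSig_leaf G hwf σ hσ t htl] at h11
  exact h11 htlab

theorem exists_sigma_evalSig (ξ : K → K) (t₀ : G.T) (ht₀ : ξ ∈ evalT G hwf t₀) :
    ∃ (σ : G.T → G.T) (hσ : G.Legal σ), ξ ∈ evalSig G σ hσ hwf t₀ := by
  classical
  let σ : G.T → G.T := fun t =>
    if h : ∃ s, G.ImmSucc t s ∧ ξ ∈ evalT G hwf s then h.choose
    else if h2 : ∃ s, G.ImmSucc t s then h2.choose else t
  have hσ : G.Legal σ := by
    intro t hl hu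
    by_cases h : ∃ s, G.ImmSucc t s ∧ ξ ∈ evalT G hwf s
    · have h1 : σ t = h.choose := by simp only [σ, dif_pos h]
      rw [h1]; exact h.choose_spec.1
    · have h2 : ∃ s, G.ImmSucc t s := exists_immSucc' he1 he2 he3 t hl
      have h1 : σ t = h2.choose := by simp only [σ, dif_neg h, dif_pos h2]
      rw [h1]; exact h2.choose_spec
  refine ⟨σ, hσ, ?_⟩
  have key : ∀ t, ξ ∈ evalT G hwf t → ξ ∈ evalSig G σ hσ hwf t := by
    intro t
    induction t using hwf.induction with
    | _ t ih =>
      intro hmem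
      by_cases hl : G.IsLeaf t
      · rwa [evalSig_leaf G hwf σ hσ t hl, ← evalT_leaf G hwf t hl]
      · by_cases hu : G.isUnion t
        · rw [evalT_union G hwf t hl hu] at hmem
          obtain ⟨s, hs⟩ := Set.mem_iUnion.mp hmem
          have h : ∃ s, G.ImmSucc t s ∧ ξ ∈ evalT G hwf s := ⟨s.1, s.2, hs⟩
          have hσt : σ t = h.choose := by simp only [σ, dif_pos h]
          rw [evalSig_union G hwf σ hσ t hl hu, hσt]
          exact ih h.choose h.choose_spec.1 h.choose_spec.2
        · rw [evalT_inter G hwf t hl hu] at hmem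
          rw [evalSig_inter G hwf σ hσ t hl hu]
          exact Set.mem_iInter.mpr fun s => ih s.1 s.2 (Set.mem_iInter.mp hmem s)
  exact key t₀ ht₀

theorem iiWins_iff_mem_evalT (r : G.T) (hr : e r = []) (ξ : K → K) :
    G.IIWins ξ ↔ ξ ∈ evalT G hwf r := by
  constructor
  · rintro ⟨σ, hσ, hw⟩
    exact evalSig_subset_evalT G hwf σ hσ r
      (mem_evalSig_of_wins he1 he2 he3 hsup hwf σ hσ r hr ξ hw)
  · intro h
    obtain ⟨σ, hσ, hmem⟩ := exists_sigma_evalSig he1 he2 he3 hsup hwf ξ r h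
    exact ⟨σ, hσ, wins_of_mem_evalSig he1 he2 he3 hsup hwf σ hσ r hr ξ hmem⟩

end Games

end Abstract

section Basics

variable {K : Type u}

theorem isBasicOpen_univ (hK : Nonempty K) : IsBasicOpen (Set.univ : Set (K → K)) := by
  left
  refine ⟨∅, id, ?_, ?_⟩
  · rw [Cardinal.mk_emptyCollection]
    exact pos_iff_ne_zero.mpr (Cardinal.mk_ne_zero K)
  · ext ζ; simp [nbhd]

theorem isBasicOpen_empty : IsBasicOpen (∅ : Set (K → K)) := Or.inr rfl

end Basics

/-- The converse direction: any set coded by a good Borel*-code on a subtree of `κ^{<ω}`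
is κ-Borel. -/
theorem kBorel_of_goodSubtreeCode {K : Type u} [LinearOrder K] (hK : Nonempty K)
    (G : LTree K) (hg : G.Good #K) (hsub : G.SubtreeOfFinSeqs) (X : Set (K → K))
    (hX : ∀ ξ : K → K, ξ ∈ X ↔ G.IIWins ξ) : KBorel X := by
  obtain ⟨e, he1, he2, he3⟩ := hsub
  obtain ⟨-, himm, -, hsup, hleaf⟩ := hg
  by_cases hT : Nonempty G.T
  · obtain ⟨t⟩ := hT
    obtain ⟨r, hr⟩ := he3 t [] (List.nil_prefix)
    have hwf := wf_succ' he1 he2 hsup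
    have hXeq : X = evalT G hwf r :=
      Set.ext fun ξ => (hX ξ).trans (iiWins_iff_mem_evalT he1 he2 he3 hsup hwf r hr ξ)
    rw [hXeq]
    exact kBorel_evalT G hwf hleaf himm r
  · have hXeq : X = Set.univ := by
      refine Set.eq_univ_of_forall fun ξ => (hX ξ).mpr ?_
      refine ⟨fun t => t, fun t => absurd ⟨t⟩ hT, fun c hc => absurd ⟨hc.1.choose⟩ hT⟩
    rw [hXeq]
    exact MuBorel.basic _ (isBasicOpen_univ hK)

end GDST
namespace GDST
set_option linter.dupNamespace false
set_option linter.unusedSectionVars false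

/-- Syntactic κ-Borel codes: well-founded trees with `K`-indexed branching whose leaves are
labelled by sets. -/
inductive BC (K : Type u) : Type u
  | leaf : Set (K → K) → BC K
  | node : Bool → (K → BC K) → BC K

namespace BC

variable {K : Type u}

/-- The subcode sitting at a finite path, if any. -/
def subAt : BC K → List K → Option (BC K)
  | c, [] => some c
  | leaf _, _ :: _ => none
  | node _ g, a :: l => subAt (g a) l

/-- All leaves are labelled by basic open sets. -/
def Valid : BC K → Prop
  | leaf S => IsBasicOpen S
  | node _ g => ∀ a, Valid (g a)

/-- The set denoted by a code. -/
def evalBC : BC K → Set (K → K)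
  | leaf S => S
  | node true g => ⋃ a, evalBC (g a)
  | node false g => ⋂ a, evalBC (g a)

@[simp] theorem subAt_nil (c : BC K) : subAt c [] = some c := by cases c <;> rfl

@[simp] theorem subAt_leaf_cons (S : Set (K → K)) (a : K) (l : List K) :
    subAt (leaf S) (a :: l) = none := rfl

@[simp] theorem subAt_node_cons (b : Bool) (g : K → BC K) (a : K) (l : List K) :
    subAt (node b g) (a :: l) = subAt (g a) l := rfl

theorem subAt_append (c : BC K) (l l' : List K) :
    subAt c (l ++ l') = (subAt c l).bind (fun d => subAt d l') := by
  induction l generalizing c with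
  | nil => simp
  | cons a l ih =>
    cases c with
    | leaf S => simp
    | node b g => simpa using ih (g a)

theorem isSome_of_prefix {c : BC K} {l l' : List K} (h : l <+: l')
    (h' : (subAt c l').isSome) : (subAt c l).isSome := by
  obtain ⟨t, rfl⟩ := h
  rw [subAt_append] at h'
  cases hs : subAt c l with
  | none => rw [hs] at h'; simp at h'
  | some d => simp

theorem valid_subAt {c : BC K} (hc : c.Valid) {l : List K} {d : BC K}
    (h : subAt c l = some d) : d.Valid := by
  induction l generalizing c with
  | nil => simp at h; rwa [← h]
  | cons a l ih =>
    cases c with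
    | leaf S => simp at h
    | node b g =>
      simp at h
      exact ih (hc a) h

/-- There is no infinite path through a code. -/
theorem noInfPath : ∀ (c : BC K) (f : ℕ → K),
    ¬ ∀ n : ℕ, (subAt c (List.ofFn (fun i : Fin n => f i))).isSome := by
  intro c
  induction c with
  | leaf S =>
    intro f h
    have h1 := h 1
    rw [List.ofFn_succ] at h1
    simp at h1
  | node b g ih =>
    intro f h
    refine ih (f 0) (fun n => f (n+1)) fun n => ?_
    have := h (n + 1)
    rw [List.ofFn_succ] at this
    simpa using this

end BC

section Concrete

variable {K : Type u} [LinearOrder K]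

open BC

/-- The labelled tree associated to a code: carrier is the set of valid paths. -/
def toLTree (c : BC K) : LTree K where
  T := {l : List K // (subAt c l).isSome}
  le a b := a.val <+: b.val
  le_refl a := List.prefix_refl _
  le_antisymm a b h1 h2 := Subtype.ext (h1.eq_of_length (le_antisymm h1.length_le h2.length_le))
  le_trans a b c h1 h2 := h1.trans h2
  isUnion t :=
    match subAt c t.val with
    | some (node b _) => b
    | _ => false
  leafLab t :=
    match subAt c t.val with
    | some (leaf S) => S
    | _ => ∅

variable (c : BC K)

theorem toLTree_le_iff (a b : (toLTree c).T) : (toLTree c).le a b ↔ a.val <+: b.val := Iff.rfl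

theorem toLTree_he3 (a : (toLTree c).T) (l : List K) (h : l <+: a.val) :
    ∃ b : (toLTree c).T, b.val = l :=
  ⟨⟨l, isSome_of_prefix h a.2⟩, rfl⟩

theorem toLTree_inj : Function.Injective (fun t : (toLTree c).T => t.val) :=
  fun a b h => Subtype.ext h

/-- Nodes where a `leaf` code sits are leaves of the tree and carry that label. -/
theorem toLTree_isLeaf {t : (toLTree c).T} {S : Set (K → K)}
    (h : subAt c t.val = some (leaf S)) : (toLTree c).IsLeaf t := by
  intro s hs
  obtain ⟨l', hl'⟩ := (toLTree_le_iff c t s).mp hs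
  have h2 := s.2
  rw [← hl', subAt_append, h] at h2
  cases l' with
  | nil => exact Subtype.ext (by rw [← hl']; simp)
  | cons x xs => simp at h2

theorem toLTree_leafLab {t : (toLTree c).T} {S : Set (K → K)}
    (h : subAt c t.val = some (leaf S)) : (toLTree c).leafLab t = S := by
  show (match subAt c t.val with
    | some (leaf S) => S
    | _ => ∅) = S
  rw [h]

theorem toLTree_isUnion {t : (toLTree c).T} {b : Bool} {g : K → BC K}
    (h : subAt c t.val = some (node b g)) : (toLTree c).isUnion t = b := by
  show (match subAt c t.val with
    | some (node b _) => b
    | _ => false) = b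
  rw [h]

theorem toLTree_child {t : (toLTree c).T} {b : Bool} {g : K → BC K}
    (h : subAt c t.val = some (node b g)) (a : K) :
    subAt c (t.val ++ [a]) = some (g a) := by
  rw [subAt_append, h]
  simp

theorem toLTree_not_isLeaf (hK : Nonempty K) {t : (toLTree c).T} {b : Bool} {g : K → BC K}
    (h : subAt c t.val = some (node b g)) : ¬ (toLTree c).IsLeaf t := by
  intro hl
  obtain ⟨a⟩ := hK
  have hchild : (subAt c (t.val ++ [a])).isSome := by rw [toLTree_child c h a]; simp
  have := hl ⟨t.val ++ [a], hchild⟩ ⟨[a], rfl⟩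
  have := congrArg (fun z => z.val.length) this
  simp at this

/-- A node of the tree carries either a leaf code or a node code. -/
theorem toLTree_dichotomy (t : (toLTree c).T) :
    (∃ S, subAt c t.val = some (leaf S)) ∨ ∃ b g, subAt c t.val = some (node b g) := by
  have h2 := t.2
  cases hs : subAt c t.val with
  | none => rw [hs] at h2; simp at h2
  | some d =>
    cases d with
    | leaf S => exact Or.inl ⟨S, rfl⟩
    | node b g => exact Or.inr ⟨b, g, rfl⟩

theorem toLTree_chain_bdd (hK : Nonempty K) (C : Set (toLTree c).T)
    (hC : ∀ a ∈ C, ∀ b ∈ C, (toLTree c).le a b ∨ (toLTree c).le b a) :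
    ∃ N, ∀ t ∈ C, t.val.length ≤ N := by
  by_contra h
  push_neg at h
  choose F hF1 hF2 using h
  have hKi : Inhabited K := ⟨hK.some⟩
  let f : ℕ → K := fun n => (F (n+1)).val.getD n default
  have key : ∀ n : ℕ, ∀ t ∈ C, n ≤ t.val.length →
      t.val.take n = List.ofFn (fun i : Fin n => f i) := by
    intro n
    induction n with
    | zero => intro t ht _; simp
    | succ n ih =>
      intro t ht hlen
      have hn : n < t.val.length := by omega
      have h1 : t.val.take (n+1) = t.val.take n ++ [t.val[n]] := by
        rw [List.take_succ, List.getElem?_eq_getElem hn]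
        rfl
      have h2 := ih t ht (by omega)
      have hFlen : n < (F (n+1)).val.length := by have := hF2 (n+1); omega
      have h3 : t.val[n] = f n := by
        rw [show f n = (F (n+1)).val[n] from List.getD_eq_getElem _ _ hFlen]
        rcases hC t ht (F (n+1)) (hF1 (n+1)) with h | h
        · exact h.getElem hn
        · exact (h.getElem hFlen).symm
      rw [h1, h2, h3]
      rw [List.ofFn_succ' (fun i : Fin (n+1) => f i), List.concat_eq_append]
      rfl
  refine noInfPath c f fun n => ?_
  have h4 : n ≤ (F n).val.length := by have := hF2 n; omega
  have h5 := key n (F n) (hF1 n) h4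
  rw [← h5]
  exact isSome_of_prefix (List.take_prefix _ _) (F n).2

theorem toLTree_good (hval : c.Valid) (hlt : ℵ₀ < #K) [Infinite K] :
    (toLTree c).Good #K := by
  have hK : Nonempty K := inferInstance
  refine ⟨?_, ?_, ?_, ?_, ?_⟩
  · -- no κ-branch
    rintro ⟨f, hf⟩
    have hg : StrictMono (fun a => (f a).val.length) := fun a b h =>
      length_lt_of_lt' (toLTree_inj c) (toLTree_le_iff c) _ _ (hf a b h)
    have hco : Countable K := ⟨⟨_, hg.injective⟩⟩
    exact absurd Cardinal.mk_le_aleph0 (not_le.mpr hlt)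
  · -- few immediate successors
    intro t
    rcases toLTree_dichotomy c t with ⟨S, hS⟩ | ⟨b, g, hg⟩
    · have hempty : IsEmpty {s : (toLTree c).T // (toLTree c).ImmSucc t s} := by
        constructor
        rintro ⟨s, hs, -⟩
        exact hs.2 ((toLTree_isLeaf c hS s hs.1).symm)
      rw [Cardinal.mk_eq_zero]
      exact zero_le
    · have hKi : Inhabited K := ⟨hK.some⟩
      have hinj : Function.Injective
          (fun s : {s : (toLTree c).T // (toLTree c).ImmSucc t s} =>
            s.1.val.getD t.val.length default) := by
        rintro ⟨s, hs⟩ ⟨s', hs'⟩ hss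
        obtain ⟨x, hx⟩ := immSucc_append_form' (toLTree_inj c) (toLTree_le_iff c)
          (toLTree_he3 c) t s hs
        obtain ⟨x', hx'⟩ := immSucc_append_form' (toLTree_inj c) (toLTree_le_iff c)
          (toLTree_he3 c) t s' hs'
        simp only [hx, hx'] at hss
        have hgl : ∀ y : K, (t.val ++ [y]).getD t.val.length default = y := by
          intro y
          rw [List.getD_eq_getElem _ _ (by simp)]
          simp
        rw [hgl x, hgl x'] at hss
        exact Subtype.ext (Subtype.ext (by rw [hx, hx', hss]))
      exact Cardinal.mk_le_of_injective hinj
  · -- size at most κ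
    calc #(toLTree c).T ≤ #(List K) := Cardinal.mk_subtype_le _
    _ = #K := Cardinal.mk_list_eq_mk K
  · -- chains have suprema
    intro C hC hne
    obtain ⟨N, hN⟩ := toLTree_chain_bdd c hK C hC
    obtain ⟨m, hm, hmax⟩ := chain_max' (toLTree_inj c) (toLTree_le_iff c) C hC hne N
      (fun t ht => hN t ht)
    exact ⟨m, fun x hx => hmax x hx, fun u hu => hu m hm⟩
  · -- leaves are basic
    intro t ht
    rcases toLTree_dichotomy c t with ⟨S, hS⟩ | ⟨b, g, hg⟩
    · rw [toLTree_leafLab c hS]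
      have := valid_subAt hval hS
      exact this
    · exact absurd ht (toLTree_not_isLeaf c hK hg)

theorem toLTree_subtree : (toLTree c).SubtreeOfFinSeqs :=
  ⟨fun t => t.val, toLTree_inj c, toLTree_le_iff c, toLTree_he3 c⟩

end Concrete

end GDST
namespace GDST
set_option linter.dupNamespace false
set_option linter.unusedSectionVars false

open BC

section Concrete2

variable {K : Type u} [LinearOrder K] (c : BC K)

/-- The value of the abstract evaluation agrees with the syntactic evaluation. -/
theorem evalT_toLTree (hK : Nonempty K)
    (hwf : WellFounded (fun s t : (toLTree c).T => (toLTree c).ImmSucc t s)) :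
    ∀ (d : BC K) (l : List K), subAt c l = some d → ∀ hl : (subAt c l).isSome,
      evalT (toLTree c) hwf ⟨l, hl⟩ = d.evalBC := by
  intro d
  induction d with
  | leaf S =>
    intro l h hl
    rw [evalT_leaf _ hwf _ (toLTree_isLeaf c (t := ⟨l, hl⟩) h), toLTree_leafLab c (t := ⟨l, hl⟩) h]
    rfl
  | node b g ih =>
    intro l h hl
    have hnl := toLTree_not_isLeaf c hK (t := ⟨l, hl⟩) h
    have hu := toLTree_isUnion c (t := ⟨l, hl⟩) h
    cases b with
    | true =>
      rw [evalT_union _ hwf _ hnl (by rw [hu])]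
      show _ = ⋃ a, (g a).evalBC
      ext ξ
      simp only [Set.mem_iUnion]
      constructor
      · rintro ⟨⟨s, hs⟩, hξ⟩
        obtain ⟨x, hx⟩ := immSucc_append_form' (toLTree_inj c) (toLTree_le_iff c)
          (toLTree_he3 c) ⟨l, hl⟩ s hs
        refine ⟨x, ?_⟩
        have hsub : subAt c s.val = some (g x) := by
          rw [hx]; exact toLTree_child c (t := ⟨l, hl⟩) h x
        rw [← ih x s.val hsub s.2]
        exact hξ
      · rintro ⟨a, hξ⟩
        have hchild := toLTree_child c (t := ⟨l, hl⟩) h a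
        have hcs : (subAt c (l ++ [a])).isSome := by rw [hchild]; simp
        refine ⟨⟨⟨l ++ [a], hcs⟩,
          immSucc_of_append' (toLTree_inj c) (toLTree_le_iff c) ⟨l, hl⟩ _ a rfl⟩, ?_⟩
        rw [ih a (l ++ [a]) hchild hcs]
        exact hξ
    | false =>
      rw [evalT_inter _ hwf _ hnl (by rw [hu]; simp)]
      show _ = ⋂ a, (g a).evalBC
      ext ξ
      simp only [Set.mem_iInter]
      constructor
      · intro hξ a
        have hchild := toLTree_child c (t := ⟨l, hl⟩) h a
        have hcs : (subAt c (l ++ [a])).isSome := by rw [hchild]; simp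
        rw [← ih a (l ++ [a]) hchild hcs]
        exact hξ ⟨⟨l ++ [a], hcs⟩,
          immSucc_of_append' (toLTree_inj c) (toLTree_le_iff c) ⟨l, hl⟩ _ a rfl⟩
      · intro hξ
        rintro ⟨s, hs⟩
        obtain ⟨x, hx⟩ := immSucc_append_form' (toLTree_inj c) (toLTree_le_iff c)
          (toLTree_he3 c) ⟨l, hl⟩ s hs
        have hsub : subAt c s.val = some (g x) := by
          rw [hx]; exact toLTree_child c (t := ⟨l, hl⟩) h x
        have hthis : evalT (toLTree c) hwf s = (g x).evalBC := ih x s.val hsub s.2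
        show ξ ∈ evalT (toLTree c) hwf s
        rw [hthis]
        exact hξ x

/-- The Borel set of pairs (ξ,η) such that the strategy coded by η wins against ξ,
defined syntactically. -/
def WinBC (cd : List K → K) : BC K → List K → Set ((K → K) × (K → K))
  | .leaf S, _ => {p | p.1 ∈ S}
  | .node true g, l => ⋃ a : K, ({p | p.2 (cd l) = a} ∩ WinBC cd (g a) (l ++ [a]))
  | .node false g, l => ⋂ a : K, WinBC cd (g a) (l ++ [a])

theorem kBorel2_inter {S T : Set ((K → K) × (K → K))} (hinf : ℵ₀ ≤ #K)
    (h1 : KBorel2 S) (h2 : KBorel2 T) : KBorel2 (S ∩ T) := by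
  have heq : S ∩ T = ⋂ b : ULift.{u} Bool, (if b.down then S else T) := by
    ext p
    simp only [Set.mem_inter_iff, Set.mem_iInter]
    constructor
    · rintro ⟨hS, hT⟩ b
      cases hb : b.down <;> simp [hS, hT]
    · intro h
      exact ⟨by simpa using h ⟨true⟩, by simpa using h ⟨false⟩⟩
  rw [heq]
  refine MuBorel2.iInter _ _ (le_trans (le_of_lt (Cardinal.lt_aleph0_of_finite _)) hinf) ?_
  rintro ⟨bd⟩
  cases bd
  · rw [if_neg (by simp)]; exact h2
  · rw [if_pos rfl]; exact h1

theorem isBasicOpen2_fst {S : Set (K → K)} (hS : IsBasicOpen S) (hK : Nonempty K) :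
    IsBasicOpen2 {p : (K → K) × (K → K) | p.1 ∈ S} := by
  refine ⟨S, Set.univ, hS, isBasicOpen_univ hK, ?_⟩
  ext p; simp

theorem isBasicOpen2_snd_eq (hinf : ℵ₀ ≤ #K) (x a : K) :
    IsBasicOpen2 {p : (K → K) × (K → K) | p.2 x = a} := by
  have hK : Nonempty K := ⟨x⟩
  refine ⟨Set.univ, nbhd {x} (fun _ => a), isBasicOpen_univ hK, ?_, ?_⟩
  · left
    exact ⟨{x}, fun _ => a, by rw [Cardinal.mk_singleton]; exact lt_of_lt_of_le one_lt_aleph0 hinf, rfl⟩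
  · ext p; simp [nbhd]

theorem kBorel2_winBC (hinf : ℵ₀ ≤ #K) (hK : Nonempty K) (cd : List K → K) :
    ∀ d : BC K, d.Valid → ∀ l : List K, KBorel2 (WinBC cd d l) := by
  intro d
  induction d with
  | leaf S =>
    intro hv l
    exact MuBorel2.basic _ (isBasicOpen2_fst hv hK)
  | node b g ih =>
    intro hv l
    cases b with
    | true =>
      refine MuBorel2.iUnion _ _ le_rfl fun a => ?_
      exact kBorel2_inter hinf (MuBorel2.basic _ (isBasicOpen2_snd_eq hinf (cd l) a))
        (ih a (hv a) (l ++ [a]))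
    | false =>
      exact MuBorel2.iInter _ _ le_rfl fun a => ih a (hv a) (l ++ [a])

-- The strategy coded by `η`.
open Classical in
noncomputable def pis (cd : List K → K) (η : K → K) : (toLTree c).T → (toLTree c).T := fun t =>
  if h : ∃ g : K → BC K, subAt c t.val = some (node true g) then
    ⟨t.val ++ [η (cd t.val)], by
      obtain ⟨g, hg⟩ := h
      rw [toLTree_child c hg]
      simp⟩
  else t

theorem pis_spec_union (cd : List K → K) (η : K → K) {t : (toLTree c).T} {g : K → BC K}
    (hg : subAt c t.val = some (node true g)) :
    (pis c cd η t).val = t.val ++ [η (cd t.val)] := by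
  have h : ∃ g : K → BC K, subAt c t.val = some (node true g) := ⟨g, hg⟩
  simp only [pis]
  exact congrArg Subtype.val (dif_pos h)

theorem pis_legal (cd : List K → K) (η : K → K) : (toLTree c).Legal (pis c cd η) := by
  intro t hl hu
  rcases toLTree_dichotomy c t with ⟨S, hS⟩ | ⟨b, g, hg⟩
  · exact absurd (toLTree_isLeaf c hS) hl
  · have hb : b = true := by rw [toLTree_isUnion c hg] at hu; exact hu
    subst hb
    exact immSucc_of_append' (toLTree_inj c) (toLTree_le_iff c) t _ (η (cd t.val))
      (pis_spec_union c cd η hg)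

theorem winBC_iff_evalSig (hK : Nonempty K)
    (hwf : WellFounded (fun s t : (toLTree c).T => (toLTree c).ImmSucc t s))
    (cd : List K → K) (η ξ : K → K) :
    ∀ (d : BC K) (l : List K), subAt c l = some d → ∀ hl : (subAt c l).isSome,
      ((ξ, η) ∈ WinBC cd d l ↔
        ξ ∈ evalSig (toLTree c) (pis c cd η) (pis_legal c cd η) hwf ⟨l, hl⟩) := by
  intro d
  induction d with
  | leaf S =>
    intro l h hl
    rw [evalSig_leaf _ hwf _ _ _ (toLTree_isLeaf c (t := ⟨l, hl⟩) h),
      toLTree_leafLab c (t := ⟨l, hl⟩) h]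
    rfl
  | node b g ih =>
    intro l h hl
    have hnl := toLTree_not_isLeaf c hK (t := ⟨l, hl⟩) h
    have hu := toLTree_isUnion c (t := ⟨l, hl⟩) h
    cases b with
    | true =>
      rw [evalSig_union _ hwf _ _ _ hnl (by rw [hu])]
      have hps : (pis c cd η ⟨l, hl⟩).val = l ++ [η (cd l)] :=
        pis_spec_union c cd η (t := ⟨l, hl⟩) h
      have hchild := toLTree_child c (t := ⟨l, hl⟩) h (η (cd l))
      have hcs : (subAt c (l ++ [η (cd l)])).isSome := by rw [hchild]; simp
      have hpt : pis c cd η ⟨l, hl⟩ = ⟨l ++ [η (cd l)], hcs⟩ := Subtype.ext hps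
      rw [hpt, ← ih (η (cd l)) (l ++ [η (cd l)]) hchild hcs]
      show (ξ, η) ∈ ⋃ a : K, ({p : (K → K) × (K → K) | p.2 (cd l) = a} ∩
        WinBC cd (g a) (l ++ [a])) ↔ _
      simp only [Set.mem_iUnion, Set.mem_inter_iff, Set.mem_setOf_eq]
      constructor
      · rintro ⟨a, ha, hmem⟩
        rwa [ha]
      · intro hmem
        exact ⟨η (cd l), rfl, hmem⟩
    | false =>
      rw [evalSig_inter _ hwf _ _ _ hnl (by rw [hu]; simp)]
      show (ξ, η) ∈ ⋂ a : K, WinBC cd (g a) (l ++ [a]) ↔ _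
      simp only [Set.mem_iInter]
      constructor
      · intro hmem
        rintro ⟨s, hs⟩
        obtain ⟨x, hx⟩ := immSucc_append_form' (toLTree_inj c) (toLTree_le_iff c)
          (toLTree_he3 c) ⟨l, hl⟩ s hs
        have hchild := toLTree_child c (t := ⟨l, hl⟩) h x
        have hcs : (subAt c (l ++ [x])).isSome := by rw [hchild]; simp
        have hthis := (ih x (l ++ [x]) hchild hcs).mp (hmem x)
        show ξ ∈ evalSig (toLTree c) (pis c cd η) (pis_legal c cd η) hwf s
        have hseq : s = ⟨l ++ [x], hcs⟩ := Subtype.ext hx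
        rw [hseq]
        exact hthis
      · intro hmem a
        have hchild := toLTree_child c (t := ⟨l, hl⟩) h a
        have hcs : (subAt c (l ++ [a])).isSome := by rw [hchild]; simp
        refine (ih a (l ++ [a]) hchild hcs).mpr ?_
        exact hmem ⟨⟨l ++ [a], hcs⟩,
          immSucc_of_append' (toLTree_inj c) (toLTree_le_iff c) ⟨l, hl⟩ _ a rfl⟩

theorem exists_eta (cdE : List K ≃ K) (σ : (toLTree c).T → (toLTree c).T)
    (hσ : (toLTree c).Legal σ) :
    ∃ η : K → K, ∀ t : (toLTree c).T, ¬ (toLTree c).IsLeaf t → (toLTree c).isUnion t = true →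
      pis c (fun l => cdE l) η t = σ t := by
  classical
  refine ⟨fun k =>
    if h : ∃ x : K, ∃ t : (toLTree c).T, t.val = cdE.symm k ∧ (σ t).val = t.val ++ [x]
    then h.choose else k, ?_⟩
  intro t hl hu
  have himm := hσ t hl hu
  obtain ⟨x, hx⟩ := immSucc_append_form' (toLTree_inj c) (toLTree_le_iff c)
    (toLTree_he3 c) t (σ t) himm
  have h : ∃ x : K, ∃ t' : (toLTree c).T,
      t'.val = cdE.symm (cdE t.val) ∧ (σ t').val = t'.val ++ [x] :=
    ⟨x, t, by simp, hx⟩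
  have hch : (σ t).val = t.val ++ [h.choose] := by
    obtain ⟨t', ht'1, ht'2⟩ := h.choose_spec
    have : t' = t := Subtype.ext (by rw [ht'1]; simp)
    rwa [this] at ht'2
  rcases toLTree_dichotomy c t with ⟨S, hS⟩ | ⟨b, g, hg⟩
  · exact absurd (toLTree_isLeaf c hS) hl
  · have hb : b = true := by rw [toLTree_isUnion c hg] at hu; exact hu
    subst hb
    apply Subtype.ext
    rw [pis_spec_union c _ _ hg, hch]
    simp only [dif_pos h]

theorem wins_congr {G : LTree K} (σ σ' : G.T → G.T)
    (h : ∀ t, ¬ G.IsLeaf t → G.isUnion t = true → σ' t = σ t) {ξ : K → K}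
    (hw : G.Wins σ ξ) : G.Wins σ' ξ := by
  intro cset hp
  refine hw cset ⟨hp.1, hp.2.1, hp.2.2.1, hp.2.2.2.1, ?_⟩
  intro t ht hl hu
  rw [← h t hl hu]
  exact hp.2.2.2.2 t ht hl hu

end Concrete2

end GDST
namespace GDST
set_option linter.dupNamespace false
set_option linter.unusedSectionVars false

open BC

section Forward

variable {K : Type u} [LinearOrder K]

theorem borel_pair (hinf : ℵ₀ ≤ #K) (X : Set (K → K)) (h : KBorel X) :
    ∃ c c' : BC K, c.Valid ∧ c'.Valid ∧ c.evalBC = X ∧ c'.evalBC = Xᶜ := by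
  classical
  haveI : Infinite K := Cardinal.infinite_iff.mpr hinf
  have hK : Nonempty K := inferInstance
  obtain ⟨eKK⟩ : Nonempty (K ≃ K × K) := by
    apply Cardinal.eq.mp
    rw [Cardinal.mk_prod]
    simp [Cardinal.mul_eq_self hinf]
  induction h with
  | basic S hS =>
    rcases hS with ⟨Y, η, hY, rfl⟩ | rfl
    · set F : K × K → Set (K → K) :=
        fun p => if p.1 ∈ Y ∧ p.2 ≠ η p.1 then nbhd {p.1} (fun _ => p.2) else ∅ with hF
      refine ⟨BC.leaf (nbhd Y η), BC.node true (fun a => BC.leaf (F (eKK a))),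
        Or.inl ⟨Y, η, hY, rfl⟩, ?_, rfl, ?_⟩
      · intro a
        show IsBasicOpen (F (eKK a))
        by_cases hc : (eKK a).1 ∈ Y ∧ (eKK a).2 ≠ η (eKK a).1
        · left
          refine ⟨{(eKK a).1}, fun _ => (eKK a).2, ?_, by simp only [hF]; rw [if_pos hc]⟩
          rw [Cardinal.mk_singleton]
          exact lt_of_lt_of_le one_lt_aleph0 hinf
        · right; simp only [hF]; rw [if_neg hc]
      · show (⋃ a, (F (eKK a) : Set (K → K))) = (nbhd Y η)ᶜ
        rw [eKK.surjective.iUnion_comp (fun p => F p)]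
        ext ζ
        simp only [Set.mem_iUnion, Set.mem_compl_iff]
        constructor
        · rintro ⟨⟨i, x⟩, hζ⟩ hmem
          simp only [hF] at hζ
          by_cases hc : i ∈ Y ∧ x ≠ η i
          · rw [if_pos hc] at hζ
            have h1 : ζ i = x := hζ i rfl
            have h2 : ζ i = η i := hmem i hc.1
            exact hc.2 (by rw [← h1, h2])
          · rw [if_neg hc] at hζ
            exact hζ
        · intro hmem
          rw [nbhd, Set.mem_setOf_eq] at hmem
          push_neg at hmem
          obtain ⟨i, hi, hne⟩ := hmem
          refine ⟨(i, ζ i), ?_⟩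
          simp only [hF]
          rw [if_pos (⟨hi, hne⟩ : i ∈ Y ∧ ζ i ≠ η i)]
          intro j hj
          rw [Set.mem_singleton_iff] at hj
          rw [hj]
    · exact ⟨BC.leaf ∅, BC.leaf Set.univ, isBasicOpen_empty, isBasicOpen_univ hK, rfl,
        by show Set.univ = (∅ : Set (K → K))ᶜ; rw [Set.compl_empty]⟩
  | compl S hS ih =>
    obtain ⟨c, c', v, v', ev, ev'⟩ := ih
    exact ⟨c', c, v', v, ev', by rw [ev, compl_compl]⟩
  | iUnion ι f hι hf ih =>
    choose cs cs' v v' ev ev' using ih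
    by_cases hne : Nonempty ι
    · obtain ⟨emb⟩ := (Cardinal.le_def ι K).mp hι
      set s : K → ι := Function.invFun emb with hsdef
      have hs : Function.Surjective s :=
        fun i => ⟨emb i, Function.leftInverse_invFun emb.injective i⟩
      refine ⟨BC.node true (fun a => cs (s a)), BC.node false (fun a => cs' (s a)),
        fun a => v _, fun a => v' _, ?_, ?_⟩
      · show (⋃ a, (cs (s a)).evalBC) = ⋃ i, f i
        simp_rw [ev]
        exact hs.iUnion_comp f
      · show (⋂ a, (cs' (s a)).evalBC) = (⋃ i, f i)ᶜ
        simp_rw [ev']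
        rw [Set.compl_iUnion]
        exact hs.iInter_comp (fun i => (f i)ᶜ)
    · haveI : IsEmpty ι := not_nonempty_iff.mp hne
      have h0 : (⋃ i, f i) = ∅ := Set.iUnion_of_empty f
      rw [h0]
      exact ⟨BC.leaf ∅, BC.leaf Set.univ, isBasicOpen_empty, isBasicOpen_univ hK, rfl,
        by show Set.univ = (∅ : Set (K → K))ᶜ; rw [Set.compl_empty]⟩
  | iInter ι f hι hf ih =>
    choose cs cs' v v' ev ev' using ih
    by_cases hne : Nonempty ι
    · obtain ⟨emb⟩ := (Cardinal.le_def ι K).mp hι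
      set s : K → ι := Function.invFun emb with hsdef
      have hs : Function.Surjective s :=
        fun i => ⟨emb i, Function.leftInverse_invFun emb.injective i⟩
      refine ⟨BC.node false (fun a => cs (s a)), BC.node true (fun a => cs' (s a)),
        fun a => v _, fun a => v' _, ?_, ?_⟩
      · show (⋂ a, (cs (s a)).evalBC) = ⋂ i, f i
        simp_rw [ev]
        exact hs.iInter_comp f
      · show (⋃ a, (cs' (s a)).evalBC) = (⋂ i, f i)ᶜ
        simp_rw [ev']
        rw [Set.compl_iInter]
        exact hs.iUnion_comp (fun i => (f i)ᶜ)
    · haveI : IsEmpty ι := not_nonempty_iff.mp hne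
      have h0 : (⋂ i, f i) = Set.univ := Set.iInter_of_empty f
      rw [h0]
      exact ⟨BC.leaf Set.univ, BC.leaf ∅, isBasicOpen_univ hK, isBasicOpen_empty, rfl,
        by show (∅ : Set (K → K)) = Set.univᶜ; rw [Set.compl_univ]⟩

theorem goodCode_of_kBorel (hinf : ℵ₀ ≤ #K) (hpow : (#K) ^ (ℵ₀ : Cardinal.{u}) = #K)
    (X : Set (K → K)) (hX : KBorel X) :
    ∃ G : LTree K, G.Good #K ∧ G.IsCode ∧ G.SubtreeOfFinSeqs ∧
      ∀ ξ : K → K, ξ ∈ X ↔ G.IIWins ξ := by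
  haveI : Infinite K := Cardinal.infinite_iff.mpr hinf
  have hK : Nonempty K := inferInstance
  have h2K : (2 : Cardinal.{u}) ≤ #K := by
    refine le_trans ?_ hinf
    exact_mod_cast le_of_lt (Cardinal.nat_lt_aleph0 2)
  have hlt : ℵ₀ < #K := by
    calc ℵ₀ < 2 ^ (ℵ₀ : Cardinal.{u}) := Cardinal.cantor _
    _ ≤ (#K) ^ (ℵ₀ : Cardinal.{u}) := Cardinal.power_le_power_right h2K
    _ = #K := hpow
  obtain ⟨c, c', hv, hv', hev, hev'⟩ := borel_pair hinf X hX
  obtain ⟨cdE⟩ : Nonempty (List K ≃ K) := Cardinal.eq.mp (Cardinal.mk_list_eq_mk K)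
  have hgood := toLTree_good c hv hlt
  have hwf := wf_succ' (toLTree_inj c) (toLTree_le_iff c) hgood.2.2.2.1
  have hroot : ((subAt c ([] : List K)).isSome : Prop) := by simp
  have hiff : ∀ ξ : K → K, (toLTree c).IIWins ξ ↔ ξ ∈ X := by
    intro ξ
    rw [iiWins_iff_mem_evalT (toLTree_inj c) (toLTree_le_iff c) (toLTree_he3 c)
      hgood.2.2.2.1 hwf ⟨[], hroot⟩ rfl ξ]
    rw [evalT_toLTree c hK hwf c [] (subAt_nil c) hroot, hev]
  refine ⟨toLTree c, hgood, ?_, toLTree_subtree c, fun ξ => (hiff ξ).symm⟩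
  refine ⟨Set.univ, fun η => pis c (fun l => cdE l) η, ?_, ?_, ?_, ?_⟩
  · refine ⟨PEmpty.{u+1}, fun i => i.elim, ?_, fun i => i.elim, ?_⟩
    · simp
    · rw [Set.compl_univ]
      exact (Set.iUnion_of_empty _).symm
  · intro η _
    exact pis_legal c _ η
  · rintro ξ ⟨σ, hσ, hw⟩
    obtain ⟨η, hη⟩ := exists_eta c cdE σ hσ
    exact ⟨η, Set.mem_univ η, wins_congr σ _ hη hw⟩
  · have hset : {p : (K → K) × (K → K) | p.2 ∈ Set.univ ∧
        (toLTree c).Wins (pis c (fun l => cdE l) p.2) p.1} =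
        WinBC (fun l => cdE l) c [] := by
      ext p
      simp only [Set.mem_univ, true_and, Set.mem_setOf_eq]
      constructor
      · intro hw
        refine (winBC_iff_evalSig c hK hwf _ p.2 p.1 c [] (subAt_nil c) hroot).mpr ?_
        exact mem_evalSig_of_wins (toLTree_inj c) (toLTree_le_iff c) (toLTree_he3 c)
          hgood.2.2.2.1 hwf _ (pis_legal c _ p.2) ⟨[], hroot⟩ rfl p.1 hw
      · intro hmem
        exact wins_of_mem_evalSig (toLTree_inj c) (toLTree_le_iff c) (toLTree_he3 c)
          hgood.2.2.2.1 hwf _ (pis_legal c _ p.2) ⟨[], hroot⟩ rfl p.1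
          ((winBC_iff_evalSig c hK hwf _ p.2 p.1 c [] (subAt_nil c) hroot).mp hmem)
    rw [hset]
    exact kBorel2_winBC hinf hK _ c hv []

end Forward

end GDST

namespace GDST

/-- Suppose κ^ω = κ. A set X ⊆ κ^κ is κ-Borel if and only if there is a
κ-Borel*-code (T,L) with T a subtree of κ^{<ω} such that for all ξ, ξ ∈ X iff II has a
winning strategy in GB(ξ,(T,L)). -/
theorem statement12 (K : Type u) [LinearOrder K] (hinf : ℵ₀ ≤ #K)
    (hpow : (#K) ^ (ℵ₀ : Cardinal.{u}) = #K) :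
    ∀ X : Set (K → K),
      KBorel X ↔
        ∃ G : LTree K, G.Good #K ∧ G.IsCode ∧ G.SubtreeOfFinSeqs ∧
          ∀ ξ : K → K, ξ ∈ X ↔ G.IIWins ξ := by
  intro X
  constructor
  · intro hX
    exact goodCode_of_kBorel hinf hpow X hX
  · rintro ⟨G, hg, hcode, hsub, hX⟩
    haveI : Infinite K := Cardinal.infinite_iff.mpr hinf
    exact kBorel_of_goodSubtreeCode inferInstance G hg hsub X hX

end GDST
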